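/- Let q = (x₀, y₀) ∈ ℝ² with x₀² + y₀² ≤ 1, let c₁(t) = (cos t, sin t), and let f_q(t) = ‖q − c₁(t)‖²/2. Then f_q is twice differentiable on ℝ with f_q''(t) = x₀ cos t + y₀ sin t, and f_q''(t) ≤ 1 for every t ∈ ℝ; equivalently, the function t ↦ t²/2 − f_q(t) is convex on ℝ. -/

import Mathlib

/-- For `q = (x₀, y₀)` with `x₀² + y₀² ≤ 1` and `c₁(t) = (cos t, sin t)`, the function
`f_q(t) = ‖q − c₁(t)‖²/2` is twice differentiable with `f_q''(t) = x₀ cos t + y₀ sin t ≤ 1`;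
equivalently `t ↦ t²/2 − f_q(t)` is convex on `ℝ`. -/
theorem stmt_12 (q : EuclideanSpace ℝ (Fin 2)) (hq : q 0 ^ 2 + q 1 ^ 2 ≤ 1)
    (c₁ : ℝ → EuclideanSpace ℝ (Fin 2))
    (hc : ∀ t, c₁ t = (WithLp.toLp 2 ![Real.cos t, Real.sin t] : EuclideanSpace ℝ (Fin 2)))
    (fq : ℝ → ℝ) (hfq : ∀ t, fq t = ‖q - c₁ t‖ ^ 2 / 2) :
    (∀ t : ℝ, DifferentiableAt ℝ fq t ∧ DifferentiableAt ℝ (deriv fq) t) ∧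
    (∀ t : ℝ, deriv (deriv fq) t = q 0 * Real.cos t + q 1 * Real.sin t) ∧
    (∀ t : ℝ, deriv (deriv fq) t ≤ 1) ∧
    ConvexOn ℝ Set.univ (fun t : ℝ => t ^ 2 / 2 - fq t) := by
  set a := q 0
  set b := q 1
  have hfq' : ∀ t, fq t = (a ^ 2 + b ^ 2 + 1) / 2 - (a * Real.cos t + b * Real.sin t) := by
    intro t
    rw [hfq t, hc t, EuclideanSpace.norm_eq, Real.sq_sqrt (by positivity)]
    simp only [Fin.sum_univ_two, PiLp.sub_apply, Matrix.cons_val_zero, Matrix.cons_val_one,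
      Matrix.head_cons, Real.norm_eq_abs, sq_abs]
    have h1 := Real.cos_sq_add_sin_sq t
    ring_nf
    nlinarith [Real.cos_sq_add_sin_sq t]
  -- first derivative
  have hd1 : ∀ t, HasDerivAt fq (a * Real.sin t - b * Real.cos t) t := by
    intro t
    have h : HasDerivAt (fun t => (a ^ 2 + b ^ 2 + 1) / 2 - (a * Real.cos t + b * Real.sin t))
        (a * Real.sin t - b * Real.cos t) t := by
      have := (((Real.hasDerivAt_cos t).const_mul a).add
        ((Real.hasDerivAt_sin t).const_mul b)).const_sub ((a ^ 2 + b ^ 2 + 1) / 2)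
      exact this.congr_deriv (by ring)
    exact h.congr_of_eventuallyEq (Filter.Eventually.of_forall fun x => (hfq' x))
  have hderiv1 : deriv fq = fun t => a * Real.sin t - b * Real.cos t :=
    funext fun t => (hd1 t).deriv
  have hd2 : ∀ t, HasDerivAt (deriv fq) (a * Real.cos t + b * Real.sin t) t := by
    intro t
    rw [hderiv1]
    have := ((Real.hasDerivAt_sin t).const_mul a).sub ((Real.hasDerivAt_cos t).const_mul b)
    exact this.congr_deriv (by ring)
  have hderiv2 : deriv (deriv fq) = fun t => a * Real.cos t + b * Real.sin t :=
    funext fun t => (hd2 t).deriv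
  have hle : ∀ t : ℝ, a * Real.cos t + b * Real.sin t ≤ 1 := by
    intro t
    nlinarith [sq_nonneg (a * Real.sin t - b * Real.cos t), Real.cos_sq_add_sin_sq t,
      sq_nonneg (a * Real.cos t + b * Real.sin t - 1),
      sq_nonneg (a * Real.cos t + b * Real.sin t)]
  refine ⟨fun t => ⟨(hd1 t).differentiableAt, (hd2 t).differentiableAt⟩,
    fun t => by rw [hderiv2], fun t => by rw [hderiv2]; exact hle t, ?_⟩
  -- convexity
  have hg1 : ∀ t : ℝ, HasDerivAt (fun t : ℝ => t ^ 2 / 2 - fq t)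
      (t - (a * Real.sin t - b * Real.cos t)) t := by
    intro t
    have hp : HasDerivAt (fun t : ℝ => t ^ 2 / 2) t t := by
      have := (hasDerivAt_pow 2 t).div_const 2
      exact this.congr_deriv (by ring)
    exact hp.sub (hd1 t)
  have hgd : deriv (fun t : ℝ => t ^ 2 / 2 - fq t)
      = fun t => t - (a * Real.sin t - b * Real.cos t) :=
    funext fun t => (hg1 t).deriv
  have hg2 : ∀ t : ℝ, HasDerivAt (deriv (fun t : ℝ => t ^ 2 / 2 - fq t))
      (1 - (a * Real.cos t + b * Real.sin t)) t := by
    intro t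
    rw [hgd]
    have := (hasDerivAt_id t).sub
      (((Real.hasDerivAt_sin t).const_mul a).sub ((Real.hasDerivAt_cos t).const_mul b))
    exact this.congr_deriv (by ring)
  refine convexOn_of_deriv2_nonneg convex_univ ?_ ?_ ?_ ?_
  · exact Continuous.continuousOn (continuous_iff_continuousAt.mpr
      fun t => ((hg1 t).differentiableAt).continuousAt)
  · exact fun t _ => ((hg1 t).differentiableAt).differentiableWithinAt
  · exact fun t _ => ((hg2 t).differentiableAt).differentiableWithinAt
  · intro t _
    have : deriv (deriv (fun t : ℝ => t ^ 2 / 2 - fq t)) t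
        = 1 - (a * Real.cos t + b * Real.sin t) := (hg2 t).deriv
    simp only [iteratedDeriv_succ, iteratedDeriv_zero] at *
    rw [show deriv^[2] (fun t : ℝ => t ^ 2 / 2 - fq t) = deriv (deriv (fun t : ℝ => t ^ 2 / 2 - fq t)) from rfl,
      this]
    linarith [hle t]
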